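/- The functions a = (X³+3c₂X²+3c₁X+c₀)/(Y-X)³, b = (Y³+3c₂Y²+3c₁Y+c₀)/(X-Y)³, p = (Y³-3Y²X-3YX²+X³-12c₂XY-6c₁(X+Y)-4c₀)/(Y-X)³ satisfy the linear system da = (2a-p+1)θ₁ + 6a·θ₂, db = 6b·θ₁ + (2b+p+1)θ₂, dp = 4(2b+p+1)θ₁ - 4(2a-p+1)θ₂, where θ₁ = dX/(2(Y-X)) and θ₂ = dY/(2(X-Y)), on any open subset of {X > Y}. -/

import Mathlib

lemma cubicHasDeriv (p0 p1 p2 p3 x : ℝ) :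
    HasDerivAt (fun t : ℝ => p3 * t ^ 3 + p2 * t ^ 2 + p1 * t + p0)
      (3 * p3 * x ^ 2 + 2 * p2 * x + p1) x := by
  have h := ((((hasDerivAt_pow 3 x).const_mul p3).add
      ((hasDerivAt_pow 2 x).const_mul p2)).add ((hasDerivAt_id x).const_mul p1)).add_const p0
  refine h.congr_deriv ?_
  norm_num
  ring

lemma deriv_cubic_div_left (p0 p1 p2 p3 k x : ℝ) (hk : k - x ≠ 0) :
    deriv (fun t : ℝ => (p3 * t ^ 3 + p2 * t ^ 2 + p1 * t + p0) / (k - t) ^ 3) x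
      = ((3 * p3 * x ^ 2 + 2 * p2 * x + p1) * (k - x) ^ 3
        - (p3 * x ^ 3 + p2 * x ^ 2 + p1 * x + p0) * ((3 : ℕ) * (k - x) ^ (3 - 1) * (-1)))
        / ((k - x) ^ 3) ^ 2 :=
  ((cubicHasDeriv p0 p1 p2 p3 x).div (((hasDerivAt_id x).const_sub k).pow 3)
    (pow_ne_zero 3 hk)).deriv

lemma deriv_cubic_div_right (p0 p1 p2 p3 k x : ℝ) (hk : x - k ≠ 0) :
    deriv (fun t : ℝ => (p3 * t ^ 3 + p2 * t ^ 2 + p1 * t + p0) / (t - k) ^ 3) x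
      = ((3 * p3 * x ^ 2 + 2 * p2 * x + p1) * (x - k) ^ 3
        - (p3 * x ^ 3 + p2 * x ^ 2 + p1 * x + p0) * ((3 : ℕ) * (x - k) ^ (3 - 1) * 1))
        / ((x - k) ^ 3) ^ 2 :=
  ((cubicHasDeriv p0 p1 p2 p3 x).div (((hasDerivAt_id x).sub_const k).pow 3)
    (pow_ne_zero 3 hk)).deriv

/-- The explicit functions `a, b, p` satisfy the linear Frobenius system
`da = (2a-p+1)θ₁ + 6a·θ₂`, `db = 6b·θ₁ + (2b+p+1)θ₂`,
`dp = 4(2b+p+1)θ₁ - 4(2a-p+1)θ₂` with `θ₁ = dX/(2(Y-X))`, `θ₂ = dY/(2(X-Y))`,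
expressed as six scalar PDE on `{X > Y}`. -/
theorem stmt_17 (c0 c1 c2 : ℝ) (a b p : ℝ → ℝ → ℝ)
    (ha : ∀ X Y, a X Y = (X ^ 3 + 3 * c2 * X ^ 2 + 3 * c1 * X + c0) / (Y - X) ^ 3)
    (hb : ∀ X Y, b X Y = (Y ^ 3 + 3 * c2 * Y ^ 2 + 3 * c1 * Y + c0) / (X - Y) ^ 3)
    (hp : ∀ X Y, p X Y = (Y ^ 3 - 3 * Y ^ 2 * X - 3 * Y * X ^ 2 + X ^ 3
        - 12 * c2 * X * Y - 6 * c1 * (X + Y) - 4 * c0) / (Y - X) ^ 3)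
    (X Y : ℝ) (hXY : Y < X) :
    deriv (fun X' => a X' Y) X = (2 * a X Y - p X Y + 1) / (2 * (Y - X)) ∧
    deriv (fun Y' => a X Y') Y = 6 * a X Y / (2 * (X - Y)) ∧
    deriv (fun X' => b X' Y) X = 6 * b X Y / (2 * (Y - X)) ∧
    deriv (fun Y' => b X Y') Y = (2 * b X Y + p X Y + 1) / (2 * (X - Y)) ∧
    deriv (fun X' => p X' Y) X = 4 * (2 * b X Y + p X Y + 1) / (2 * (Y - X)) ∧
    deriv (fun Y' => p X Y') Y = -(4 * (2 * a X Y - p X Y + 1)) / (2 * (X - Y)) := by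
  have hYX : Y - X ≠ 0 := sub_ne_zero.mpr hXY.ne
  have hXY' : X - Y ≠ 0 := sub_ne_zero.mpr hXY.ne'
  refine ⟨?_, ?_, ?_, ?_, ?_, ?_⟩
  · have e : (fun X' => a X' Y) = fun t : ℝ =>
        ((1 : ℝ) * t ^ 3 + (3 * c2) * t ^ 2 + (3 * c1) * t + c0) / (Y - t) ^ 3 := by
      funext t; rw [ha]; ring
    rw [e, deriv_cubic_div_left c0 (3 * c1) (3 * c2) 1 Y X hYX, ha X Y, hp X Y]
    field_simp
    ring
  · have e : (fun Y' => a X Y') = fun t : ℝ =>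
        ((0 : ℝ) * t ^ 3 + (0 : ℝ) * t ^ 2 + (0 : ℝ) * t
          + (X ^ 3 + 3 * c2 * X ^ 2 + 3 * c1 * X + c0)) / (t - X) ^ 3 := by
      funext t; rw [ha]; ring
    rw [e, deriv_cubic_div_right _ 0 0 0 X Y hYX, ha X Y]
    field_simp
    ring
  · have e : (fun X' => b X' Y) = fun t : ℝ =>
        ((0 : ℝ) * t ^ 3 + (0 : ℝ) * t ^ 2 + (0 : ℝ) * t
          + (Y ^ 3 + 3 * c2 * Y ^ 2 + 3 * c1 * Y + c0)) / (t - Y) ^ 3 := by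
      funext t; rw [hb]; ring
    rw [e, deriv_cubic_div_right _ 0 0 0 Y X hXY', hb X Y]
    field_simp
    ring
  · have e : (fun Y' => b X Y') = fun t : ℝ =>
        ((1 : ℝ) * t ^ 3 + (3 * c2) * t ^ 2 + (3 * c1) * t + c0) / (X - t) ^ 3 := by
      funext t; rw [hb]; ring
    rw [e, deriv_cubic_div_left c0 (3 * c1) (3 * c2) 1 X Y hXY', hb X Y, hp X Y]
    field_simp
    ring
  · have e : (fun X' => p X' Y) = fun t : ℝ =>
        ((1 : ℝ) * t ^ 3 + (-(3 * Y)) * t ^ 2 + (-(3 * Y ^ 2) - 12 * c2 * Y - 6 * c1) * t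
          + (Y ^ 3 - 6 * c1 * Y - 4 * c0)) / (Y - t) ^ 3 := by
      funext t; rw [hp]; ring
    rw [e, deriv_cubic_div_left _ _ _ 1 Y X hYX, hb X Y, hp X Y]
    field_simp
    ring
  · have e : (fun Y' => p X Y') = fun t : ℝ =>
        ((1 : ℝ) * t ^ 3 + (-(3 * X)) * t ^ 2 + (-(3 * X ^ 2) - 12 * c2 * X - 6 * c1) * t
          + (X ^ 3 - 6 * c1 * X - 4 * c0)) / (t - X) ^ 3 := by
      funext t; rw [hp]; ring
    rw [e, deriv_cubic_div_right _ _ _ 1 X Y hYX, ha X Y, hp X Y]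
    field_simp
    ring
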